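/- arXiv:math/0005114 — 2 statements merged into one kernel-verified Lean document; each statement's English description precedes it below -/
import Mathlib

section
/- The one-relator group L = ⟨x, y | x y² x = y x² y⟩ is isomorphic to the one-relator group ⟨t, z | z·(t⁻¹ z t) = (t⁻¹ z t)·z⟩, i.e., to ⟨t, z | [z, z^t] = 1⟩ where z^t = t⁻¹ z t. -/
noncomputable section

/-- The relator `x y² x (y x² y)⁻¹` in the free group on `{x, y}`
(`x = FreeGroup.of false`, `y = FreeGroup.of true`). -/
def relL : FreeGroup Bool :=
  FreeGroup.of false * FreeGroup.of true ^ 2 * FreeGroup.of false *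
    (FreeGroup.of true * FreeGroup.of false ^ 2 * FreeGroup.of true)⁻¹

/-- The one-relator group `L = ⟨x, y | x y² x = y x² y⟩`. -/
abbrev Lgroup : Type := PresentedGroup ({relL} : Set (FreeGroup Bool))

/-- The relator `[z, z^t] = z (t⁻¹ z t) ((t⁻¹ z t) z)⁻¹` in the free group on `{t, z}`
(`t = FreeGroup.of false`, `z = FreeGroup.of true`). -/
def relT : FreeGroup Bool :=
  FreeGroup.of true * ((FreeGroup.of false)⁻¹ * FreeGroup.of true * FreeGroup.of false) *
    (((FreeGroup.of false)⁻¹ * FreeGroup.of true * FreeGroup.of false) * FreeGroup.of true)⁻¹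

namespace L8aux

/-- x ↦ t, y ↦ t⁻¹ z -/
def gLT : Bool → FreeGroup Bool
  | false => FreeGroup.of false
  | true => (FreeGroup.of false)⁻¹ * FreeGroup.of true

/-- t ↦ x, z ↦ x y -/
def gTL : Bool → FreeGroup Bool
  | false => FreeGroup.of false
  | true => FreeGroup.of false * FreeGroup.of true

lemma lift_mk (rels : Set (FreeGroup Bool)) (g : Bool → FreeGroup Bool)
    (w : FreeGroup Bool) :
    FreeGroup.lift (fun b => PresentedGroup.mk rels (g b)) w =
      PresentedGroup.mk rels (FreeGroup.lift g w) := by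
  induction w using FreeGroup.induction_on with
  | C1 => simp
  | of x =>
      simp
  | inv_of x ih => simp only [map_inv, ih]
  | mul x y ihx ihy => simp only [map_mul, ihx, ihy]

lemma gLT_relL : FreeGroup.lift gLT relL = relT := by
  simp [relL, relT, gLT, map_mul, map_pow, map_inv, FreeGroup.lift_apply_of, pow_two, mul_assoc]

lemma gTL_relT : FreeGroup.lift gTL relT = relL := by
  simp [relL, relT, gTL, map_mul, map_pow, map_inv, FreeGroup.lift_apply_of, pow_two, mul_assoc]

lemma mem_singleton_eq_one (r : FreeGroup Bool) :
    PresentedGroup.mk ({r} : Set (FreeGroup Bool)) r = 1 :=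
  (QuotientGroup.eq_one_iff _).2 (Subgroup.subset_normalClosure rfl)

def φ : Lgroup →* PresentedGroup ({relT} : Set (FreeGroup Bool)) :=
  PresentedGroup.toGroup (f := fun b => PresentedGroup.mk _ (gLT b)) (by
    intro r hr
    rw [Set.mem_singleton_iff] at hr
    subst hr
    rw [lift_mk, gLT_relL]
    exact mem_singleton_eq_one relT)

def ψ : PresentedGroup ({relT} : Set (FreeGroup Bool)) →* Lgroup :=
  PresentedGroup.toGroup (f := fun b => PresentedGroup.mk _ (gTL b)) (by
    intro r hr
    rw [Set.mem_singleton_iff] at hr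
    subst hr
    rw [lift_mk, gTL_relT]
    exact mem_singleton_eq_one relL)

lemma mk_of (rels : Set (FreeGroup Bool)) (x : Bool) :
    PresentedGroup.mk rels (FreeGroup.of x) = PresentedGroup.of x := rfl

lemma ψφ : ψ.comp φ = MonoidHom.id _ := by
  apply PresentedGroup.ext
  intro b
  show ψ (φ (PresentedGroup.of b)) = PresentedGroup.of b
  cases b <;>
    simp [φ, ψ, gLT, gTL, PresentedGroup.toGroup.of, map_mul, map_inv, mk_of]

lemma φψ : φ.comp ψ = MonoidHom.id _ := by
  apply PresentedGroup.ext
  intro b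
  show φ (ψ (PresentedGroup.of b)) = PresentedGroup.of b
  cases b <;>
    simp [φ, ψ, gLT, gTL, PresentedGroup.toGroup.of, map_mul, map_inv, mk_of]

end L8aux

/-- **Statement 8.** `⟨x, y | x y² x = y x² y⟩ ≅ ⟨t, z | z·(t⁻¹ z t) = (t⁻¹ z t)·z⟩`. -/
theorem L_iso_commuting_conjugate_presentation :
    Nonempty (Lgroup ≃* PresentedGroup ({relT} : Set (FreeGroup Bool))) := by
  exact ⟨MonoidHom.toMulEquiv L8aux.φ L8aux.ψ L8aux.ψφ L8aux.φψ⟩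
end
end

section
/- There exists an injective group homomorphism from the group L_∞ = ⟨z_i (i ∈ ℤ) | z_i z_{i+1} = z_{i+1} z_i for all i ∈ ℤ⟩ into the one-relator group L = ⟨x, y | x y² x = y x² y⟩. -/
noncomputable section

/-- The defining relators of `L_∞ = ⟨z_i (i ∈ ℤ) | z_i z_{i+1} = z_{i+1} z_i⟩`. -/
def relsLinf : Set (FreeGroup ℤ) :=
  {r | ∃ i : ℤ, r = FreeGroup.of i * FreeGroup.of (i + 1) *
    (FreeGroup.of i)⁻¹ * (FreeGroup.of (i + 1))⁻¹}

/-! ### Auxiliary material -/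

abbrev Linf : Type := PresentedGroup relsLinf

lemma comm_to_rel {G : Type*} [Group G] (a b : G) (h : a * b = b * a) :
    a * b * a⁻¹ * b⁻¹ = 1 := by rw [h]; group

lemma rel_of_comm {G : Type*} [Group G] (x y : G) (h : (x*y)*(y*x) = (y*x)*(x*y)) :
    x * y ^ 2 * x * (y * x ^ 2 * y)⁻¹ = 1 := by
  rw [mul_inv_eq_one]
  calc x * y ^ 2 * x = (x*y)*(y*x) := by simp [pow_two, mul_assoc]
    _ = (y*x)*(x*y) := h
    _ = y * x ^ 2 * y := by simp [pow_two, mul_assoc]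

lemma comm_of_rel {G : Type*} [Group G] (x y : G)
    (h : x * y ^ 2 * x * (y * x ^ 2 * y)⁻¹ = 1) :
    (x*y)*(y*x) = (y*x)*(x*y) := by
  rw [mul_inv_eq_one] at h
  calc (x*y)*(y*x) = x * y ^ 2 * x := by simp [pow_two, mul_assoc]
    _ = y * x ^ 2 * y := h
    _ = (y*x)*(x*y) := by simp [pow_two, mul_assoc]

lemma Linf_comm (i : ℤ) :
    (PresentedGroup.of i : Linf) * PresentedGroup.of (i+1)
      = PresentedGroup.of (i+1) * PresentedGroup.of i := by
  have h : PresentedGroup.mk relsLinf (FreeGroup.of i * FreeGroup.of (i + 1) *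
      (FreeGroup.of i)⁻¹ * (FreeGroup.of (i + 1))⁻¹) = 1 := by
    apply (QuotientGroup.eq_one_iff _).2
    exact Subgroup.subset_normalClosure ⟨i, rfl⟩
  simp only [map_mul, map_inv] at h
  have h' : (PresentedGroup.of i : Linf) * PresentedGroup.of (i+1) *
      (PresentedGroup.of i)⁻¹ * (PresentedGroup.of (i+1))⁻¹ = 1 := h
  exact mul_inv_eq_iff_eq_mul.mp (mul_inv_eq_one.mp h')

/-- The shift `z_i ↦ z_{i+1}` as a homomorphism. -/
def shiftHom : Linf →* Linf :=
  PresentedGroup.toGroup (f := fun i => (PresentedGroup.of (i+1) : Linf)) (by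
    rintro r ⟨i, rfl⟩
    simp only [map_mul, map_inv, FreeGroup.lift_apply_of]
    exact comm_to_rel _ _ (Linf_comm (i+1)))

/-- The shift `z_i ↦ z_{i-1}` as a homomorphism. -/
def unshiftHom : Linf →* Linf :=
  PresentedGroup.toGroup (f := fun i => (PresentedGroup.of (i-1) : Linf)) (by
    rintro r ⟨i, rfl⟩
    simp only [map_mul, map_inv, FreeGroup.lift_apply_of]
    rw [show (i + 1 - 1 : ℤ) = (i - 1) + 1 by ring]
    exact comm_to_rel _ _ (Linf_comm (i-1)))

/-- The shift automorphism of `L_∞`. -/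
def shift : MulAut Linf :=
  MonoidHom.toMulEquiv shiftHom unshiftHom
    (by
      ext i
      show unshiftHom (shiftHom (PresentedGroup.of i)) = PresentedGroup.of i
      rw [shiftHom, PresentedGroup.toGroup.of, unshiftHom, PresentedGroup.toGroup.of,
        add_sub_cancel_right])
    (by
      ext i
      show shiftHom (unshiftHom (PresentedGroup.of i)) = PresentedGroup.of i
      rw [unshiftHom, PresentedGroup.toGroup.of, shiftHom, PresentedGroup.toGroup.of,
        sub_add_cancel])

@[simp] lemma shift_of (i : ℤ) :
    shift (PresentedGroup.of i) = (PresentedGroup.of (i+1) : Linf) := by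
  show shiftHom (PresentedGroup.of i) = _
  exact PresentedGroup.toGroup.of _

@[simp] lemma shift_symm_of (i : ℤ) :
    shift⁻¹ (PresentedGroup.of i) = (PresentedGroup.of (i-1) : Linf) := by
  show unshiftHom (PresentedGroup.of i) = _
  exact PresentedGroup.toGroup.of _

lemma shift_zpow (n : ℤ) : ∀ i : ℤ,
    (shift ^ n) (PresentedGroup.of i) = (PresentedGroup.of (i+n) : Linf) := by
  induction n using Int.induction_on with
  | zero => simp
  | succ k ih =>
      intro i
      rw [zpow_add_one, MulAut.mul_apply, shift_of, ih (i+1),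
        show (i + 1 + k : ℤ) = i + (k+1) by ring]
  | pred k ih =>
      intro i
      rw [zpow_sub_one, MulAut.mul_apply, shift_symm_of, ih (i-1),
        show (i - 1 + -(k:ℤ) : ℤ) = i + (-(k:ℤ) - 1) by ring]

/-- The action of `ℤ` on `L_∞` by powers of the shift. -/
def phiZ : Multiplicative ℤ →* MulAut Linf := zpowersHom (MulAut Linf) shift

abbrev SDP : Type := SemidirectProduct Linf (Multiplicative ℤ) phiZ

namespace LinfEmbed

open PresentedGroup SemidirectProduct

def X : Lgroup := PresentedGroup.of false
def Y : Lgroup := PresentedGroup.of true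

lemma L_rel : X * Y ^ 2 * X * (Y * X ^ 2 * Y)⁻¹ = 1 := by
  have h : PresentedGroup.mk ({relL} : Set (FreeGroup Bool)) relL = 1 := by
    apply (QuotientGroup.eq_one_iff _).2
    exact Subgroup.subset_normalClosure rfl
  simp only [relL, map_mul, map_inv, map_pow] at h
  exact h

lemma keyc : (X*Y)*(Y*X) = (Y*X)*(X*Y) := comm_of_rel X Y L_rel

def A : Lgroup := X * Y

lemma keyConj : A * (X*A*X⁻¹) = (X*A*X⁻¹) * A := by
  calc A * (X*A*X⁻¹) = X*((Y*X)*(X*Y))*X⁻¹ := by simp only [A]; group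
    _ = X*((X*Y)*(Y*X))*X⁻¹ := by rw [keyc]
    _ = (X*A*X⁻¹) * A := by simp only [A]; group

/-- The candidate generators `z_i ↦ X^i A X^{-i}` inside `L`. -/
def c (i : ℤ) : Lgroup := X ^ i * A * (X ^ i)⁻¹

lemma c_succ (i : ℤ) : c (i+1) = X^i * (X*A*X⁻¹) * (X^i)⁻¹ := by
  simp only [c, zpow_add, zpow_one]; group

lemma c_comm (i : ℤ) : c i * c (i+1) = c (i+1) * c i := by
  rw [c_succ]
  calc c i * (X^i * (X*A*X⁻¹) * (X^i)⁻¹)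
      = X^i * (A * (X*A*X⁻¹)) * (X^i)⁻¹ := by simp only [c]; group
    _ = X^i * ((X*A*X⁻¹) * A) * (X^i)⁻¹ := by rw [keyConj]
    _ = (X^i * (X*A*X⁻¹) * (X^i)⁻¹) * c i := by simp only [c]; group

/-- The homomorphism `L_∞ →* L`, `z_i ↦ X^i A X^{-i}`. -/
def f₁ : Linf →* Lgroup :=
  PresentedGroup.toGroup (f := c) (by
    rintro r ⟨i, rfl⟩
    simp only [map_mul, map_inv, FreeGroup.lift_apply_of]
    exact comm_to_rel _ _ (c_comm i))

lemma f₁_of (i : ℤ) : f₁ (PresentedGroup.of i) = c i := PresentedGroup.toGroup.of _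

/-- The stable letter in the semidirect product. -/
def u : SDP := SemidirectProduct.inr (Multiplicative.ofAdd (1:ℤ))

/-- The image of `y` in the semidirect product. -/
def v : SDP := u⁻¹ * SemidirectProduct.inl (PresentedGroup.of 0)

lemma phiZ_of (n i : ℤ) :
    phiZ (Multiplicative.ofAdd n) (PresentedGroup.of i) = PresentedGroup.of (i+n) := by
  rw [phiZ, zpowersHom_apply]
  exact shift_zpow _ i

lemma fxy : u * v = SemidirectProduct.inl (PresentedGroup.of 0) := by
  rw [v, ← mul_assoc, mul_inv_cancel, one_mul]

lemma fyx : v * u = SemidirectProduct.inl (PresentedGroup.of (-1)) := by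
  have h := (SemidirectProduct.inl_aut_inv (φ := phiZ) (Multiplicative.ofAdd (1:ℤ))
    (PresentedGroup.of 0)).symm
  have h2 : ((phiZ (Multiplicative.ofAdd (1:ℤ)))⁻¹) (PresentedGroup.of 0)
      = (PresentedGroup.of (-1) : Linf) := by
    rw [← map_inv, ← ofAdd_neg, phiZ_of]
    norm_num
  rw [v, u, ← map_inv, h, h2]

lemma sdp_comm : (u * v) * (v * u) = (v * u) * (u * v) := by
  rw [fxy, fyx, ← map_mul, ← map_mul]
  have h := Linf_comm (-1)
  norm_num at h
  rw [h]

/-- The homomorphism `L →* L_∞ ⋊ ℤ`. -/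
def fhom : Lgroup →* SDP :=
  PresentedGroup.toGroup (f := fun b => cond b v u) (by
    intro r hr
    rw [Set.mem_singleton_iff] at hr; subst hr
    simp only [relL, map_mul, map_inv, map_pow, FreeGroup.lift_apply_of, cond_true, cond_false]
    exact rel_of_comm _ _ sdp_comm)

lemma fhom_X : fhom X = u := PresentedGroup.toGroup.of _
lemma fhom_Y : fhom Y = v := PresentedGroup.toGroup.of _

lemma fhom_A : fhom A = SemidirectProduct.inl (PresentedGroup.of 0) := by
  rw [A, map_mul, fhom_X, fhom_Y, fxy]

lemma fhom_c (i : ℤ) : fhom (c i) = SemidirectProduct.inl (PresentedGroup.of i) := by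
  have hu : u ^ i = SemidirectProduct.inr (φ := phiZ) (Multiplicative.ofAdd (1:ℤ) ^ i) :=
    (map_zpow SemidirectProduct.inr _ _).symm
  have hphi : phiZ (Multiplicative.ofAdd (1:ℤ) ^ i) = shift ^ i := by
    rw [map_zpow, phiZ, zpowersHom_apply]
    norm_num
  calc fhom (c i) = u ^ i * SemidirectProduct.inl (PresentedGroup.of 0) * (u ^ i)⁻¹ := by
        simp only [c, map_mul, map_inv, map_zpow, fhom_X, fhom_A]
    _ = SemidirectProduct.inl (phiZ (Multiplicative.ofAdd (1:ℤ) ^ i) (PresentedGroup.of 0)) := by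
        rw [hu, ← map_inv, ← SemidirectProduct.inl_aut]
    _ = SemidirectProduct.inl (PresentedGroup.of i) := by
        rw [hphi, shift_zpow, zero_add]

end LinfEmbed

/-- **Statement 9.** The group `L_∞` embeds into the one-relator group
`L = ⟨x, y | x y² x = y x² y⟩`. -/
theorem Linf_embeds_in_L :
    ∃ φ : PresentedGroup relsLinf →* Lgroup, Function.Injective φ := by
  refine ⟨LinfEmbed.f₁, ?_⟩
  have hcomp : LinfEmbed.fhom.comp LinfEmbed.f₁
      = (SemidirectProduct.inl : Linf →* SDP) := by
    apply PresentedGroup.ext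
    intro i
    simp only [MonoidHom.comp_apply]
    rw [LinfEmbed.f₁_of]
    exact LinfEmbed.fhom_c i
  have key : ∀ w : Linf, LinfEmbed.fhom (LinfEmbed.f₁ w) = SemidirectProduct.inl w :=
    fun w => DFunLike.congr_fun hcomp w
  intro a b hab
  apply SemidirectProduct.inl_injective (φ := phiZ)
  rw [← key a, ← key b, hab]
end
end
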